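/- arXiv:math/0110252 — 3 statements merged into one kernel-verified Lean document; each statement's English description precedes it below -/
import Mathlib

section
/- Let φ : R^n → R be convex, positively homogeneous, nonnegative, nondecreasing in each variable, and exhaustive (φ(t) → ∞ as min_k t_k → ∞ along the positive orthant; equivalently φ > 0 outside the negative orthant's closure in the relevant sense). Let L = {t ∈ R^n : φ(t) = 1}, and for a compact subset F ⊆ L define Γ_F = {a ∈ R₊^n : sup_{t∈F} ⟨a,t⟩ = sup_{t∈L} ⟨a,t⟩ = 1} and Θ_F = {λa : 0 ≤ λ ≤ 1, a ∈ Γ_F}. Then Θ_F equals the gradient image ω(F, φ₁) = ⋃_{t⁰∈F} {a ∈ R^n : φ₁(t) ≥ 1 + ⟨a, t - t⁰⟩ for all t ∈ R^n}, where φ₁ = max(φ, 1). -/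
open Finset

section Aux

variable {n : ℕ} {φ : (Fin n → ℝ) → ℝ}

private lemma aux_phi_zero (hhom : ∀ c : ℝ, 0 < c → ∀ t, φ (c • t) = c * φ t) :
    φ 0 = 0 := by
  have h := hhom 2 (by norm_num) 0
  rw [smul_zero] at h
  linarith

private lemma aux_subadd (hconv : ConvexOn ℝ Set.univ φ)
    (hhom : ∀ c : ℝ, 0 < c → ∀ t, φ (c • t) = c * φ t) :
    ∀ x y, φ (x + y) ≤ φ x + φ y := by
  intro x y
  have h := hconv.2 (Set.mem_univ x) (Set.mem_univ y)
    (by norm_num : (0:ℝ) ≤ 1/2) (by norm_num : (0:ℝ) ≤ 1/2) (by norm_num)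
  have h2 := hhom 2 (by norm_num) ((1/2 : ℝ) • x + (1/2 : ℝ) • y)
  have hxy : (2:ℝ) • ((1/2 : ℝ) • x + (1/2 : ℝ) • y) = x + y := by
    rw [smul_add, smul_smul, smul_smul]; norm_num
  rw [hxy] at h2
  rw [smul_eq_mul, smul_eq_mul] at h
  linarith

private lemma aux_cont (hconv : ConvexOn ℝ Set.univ φ)
    (hhom : ∀ c : ℝ, 0 < c → ∀ t, φ (c • t) = c * φ t)
    (hnonneg : ∀ t, 0 ≤ φ t)
    (hmono : ∀ s t : Fin n → ℝ, (∀ i, s i ≤ t i) → φ s ≤ φ t) :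
    Continuous φ := by
  set C := φ (fun _ => 1) with hC
  have hC0 : 0 ≤ C := hnonneg _
  have hsub := aux_subadd hconv hhom
  have hlip : ∀ x y : Fin n → ℝ, φ x - φ y ≤ C * ‖x - y‖ := by
    intro x y
    have h1 : φ x ≤ φ y + φ (x - y) := by
      have := hsub y (x - y); simpa using this
    have h2 : φ (x - y) ≤ C * ‖x - y‖ := by
      rcases eq_or_lt_of_le (norm_nonneg (x - y)) with h | h
      · have hx : x - y = 0 := by rw [← norm_eq_zero, ← h]
        calc φ (x - y) = 0 := by rw [hx]; exact aux_phi_zero hhom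
          _ ≤ C * ‖x - y‖ := by positivity
      · have hm : φ (x - y) ≤ φ (‖x - y‖ • (fun _ => (1:ℝ))) := by
          apply hmono; intro i
          simp only [Pi.smul_apply, smul_eq_mul, mul_one]
          calc (x - y) i ≤ |(x - y) i| := le_abs_self _
            _ ≤ ‖x - y‖ := by simpa [Real.norm_eq_abs] using norm_le_pi_norm (x - y) i
        rw [hhom _ h] at hm
        rw [mul_comm] at hm
        exact hm
    linarith
  have hlw : LipschitzWith (Real.toNNReal C) φ := by
    apply LipschitzWith.of_dist_le_mul
    intro x y
    rw [Real.dist_eq, dist_eq_norm, Real.coe_toNNReal _ hC0, abs_sub_le_iff]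
    refine ⟨hlip x y, ?_⟩
    have := hlip y x
    rwa [norm_sub_rev] at this
  exact hlw.continuous

/-- Existence of a supporting linear functional at a point of the level set. -/
private lemma aux_support (hconv : ConvexOn ℝ Set.univ φ)
    (hhom : ∀ c : ℝ, 0 < c → ∀ t, φ (c • t) = c * φ t)
    (hnonneg : ∀ t, 0 ≤ φ t)
    (hmono : ∀ s t : Fin n → ℝ, (∀ i, s i ≤ t i) → φ s ≤ φ t)
    {t0 : Fin n → ℝ} (h0 : φ t0 = 1) :
    ∃ g : Fin n → ℝ, (∀ i, 0 ≤ g i) ∧ (∑ i, g i * t0 i = 1) ∧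
      ∀ t, ∑ i, g i * t i ≤ φ t := by
  have hcont := aux_cont hconv hhom hnonneg hmono
  set s : Set ((Fin n → ℝ) × ℝ) := {p | φ p.1 < p.2} with hs
  have hopen : IsOpen s := isOpen_lt (hcont.comp continuous_fst) continuous_snd
  have hconvs : Convex ℝ s := by
    rintro ⟨x, α⟩ hx ⟨y, β⟩ hy u v hu hv huv
    simp only [hs, Set.mem_setOf_eq] at hx hy ⊢
    have h := hconv.2 (Set.mem_univ x) (Set.mem_univ y) hu hv huv
    rw [smul_eq_mul, smul_eq_mul] at h
    have hlt : u * φ x + v * φ y < u * α + v * β := by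
      rcases hu.eq_or_lt with hu0 | hu0
      · have hv1 : v = 1 := by linarith [huv, hu0]
        rw [← hu0]; simp only [zero_mul, zero_add, hv1, one_mul]; exact hy
      · have h1 : u * φ x < u * α := by exact (mul_lt_mul_iff_right₀ hu0).2 hx
        have h2 : v * φ y ≤ v * β := mul_le_mul_of_nonneg_left hy.le hv
        linarith
    calc φ ((u • x + v • y, u • α + v • β).1) = φ (u • x + v • y) := rfl
      _ ≤ u * φ x + v * φ y := h
      _ < u • α + v • β := by rw [smul_eq_mul, smul_eq_mul]; exact hlt
  have hx0 : ((t0, (1:ℝ)) : (Fin n → ℝ) × ℝ) ∉ s := by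
    simp only [hs, Set.mem_setOf_eq, h0]; exact lt_irrefl 1
  obtain ⟨f, hf⟩ := geometric_hahn_banach_open_point hconvs hopen hx0
  -- f a < f (t0, 1) for all a ∈ s
  set c : ℝ := f (0, 1) with hc
  have hsplit : ∀ (t : Fin n → ℝ) (y : ℝ), f (t, y) = f (t, 0) + y * c := by
    intro t y
    have : ((t, y) : (Fin n → ℝ) × ℝ) = (t, 0) + y • ((0 : Fin n → ℝ), (1:ℝ)) := by
      ext <;> simp
    rw [this, map_add, map_smul, smul_eq_mul]
  have hineq : ∀ (t : Fin n → ℝ) (y : ℝ), φ t < y → f (t, 0) + y * c < f (t0, 0) + c := by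
    intro t y hy
    have := hf (t, y) (by simpa [hs] using hy)
    rwa [hsplit t y, hsplit t0 1, one_mul] at this
  have hcneg : c < 0 := by
    have := hineq t0 2 (by rw [h0]; norm_num)
    linarith
  have key : ∀ t, f (t, 0) + φ t * c ≤ f (t0, 0) + c := by
    intro t
    by_contra hcon
    push_neg at hcon
    set δ : ℝ := f (t, 0) + φ t * c - (f (t0, 0) + c) with hδ
    have hδpos : 0 < δ := by linarith
    set y : ℝ := φ t + δ / (-2 * c) with hy
    have hdiv : 0 < δ / (-2 * c) := div_pos hδpos (by linarith)
    have hypos : φ t < y := by rw [hy]; linarith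
    have h2 := hineq t y hypos
    have hc0 : c ≠ 0 := ne_of_lt hcneg
    have hmul : (δ / (-2 * c)) * c = -δ / 2 := by
      field_simp
    rw [hy] at h2
    have : f (t, 0) + (φ t + δ / (-2 * c)) * c
        = f (t, 0) + φ t * c + (δ / (-2 * c)) * c := by ring
    rw [this, hmul] at h2
    linarith
  -- linear representation
  set d : ℝ := -c with hd
  have hdpos : 0 < d := by simp [hd]; linarith
  set g : Fin n → ℝ := fun i => f (Pi.single i 1, 0) / d with hg
  have hlin : ∀ t : Fin n → ℝ, ∑ i, g i * t i = f (t, 0) / d := by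
    intro t
    have hrep : ((t, (0:ℝ)) : (Fin n → ℝ) × ℝ)
        = ∑ i, t i • ((Pi.single i 1 : Fin n → ℝ), (0:ℝ)) := by
      apply Prod.ext
      · rw [Prod.fst_sum]
        simp only [Prod.smul_fst]
        rw [show (∑ i, t i • (Pi.single i 1 : Fin n → ℝ))
            = ∑ i, (Pi.single i (t i) : Fin n → ℝ) from by
          apply Finset.sum_congr rfl
          intro i _
          rw [← Pi.single_smul, smul_eq_mul, mul_one]]
        exact (Finset.univ_sum_single t).symm
      · rw [Prod.snd_sum]; simp [Prod.smul_snd]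
    have : f (t, 0) = ∑ i, t i * f (Pi.single i 1, 0) := by
      rw [hrep, map_sum]
      apply Finset.sum_congr rfl
      intro i _
      rw [map_smul, smul_eq_mul]
    rw [this, Finset.sum_div]
    apply Finset.sum_congr rfl
    intro i _
    rw [hg]
    ring
  have hS : ∀ t, ∑ i, g i * t i - φ t ≤ (∑ i, g i * t0 i) - 1 := by
    intro t
    have h1 := key t
    rw [hlin, hlin]
    have : f (t, 0) + φ t * c ≤ f (t0, 0) + c := h1
    have hc' : c = -d := by rw [hd]; ring
    rw [hc'] at this
    have h2 : f (t, 0) - φ t * d ≤ f (t0, 0) - d := by linarith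
    have := div_le_div_of_nonneg_right h2 hdpos.le
    rw [sub_div, sub_div] at this
    have ht' : φ t * d / d = φ t := by field_simp
    have hd' : d / d = 1 := by field_simp
    rw [ht', hd'] at this
    exact this
  have hlinsmul : ∀ (r : ℝ) (t : Fin n → ℝ), ∑ i, g i * (r • t) i = r * ∑ i, g i * t i := by
    intro r t
    rw [Finset.mul_sum]
    apply Finset.sum_congr rfl
    intro i _
    simp only [Pi.smul_apply, smul_eq_mul]
    ring
  have hSt0 : ∑ i, g i * t0 i = 1 := by
    have h2 := hS ((2:ℝ) • t0)
    have hh2 := hhom 2 (by norm_num) t0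
    rw [hlinsmul, hh2, h0] at h2
    have h3 := hS (((1:ℝ)/2) • t0)
    have hh3 := hhom (1/2) (by norm_num) t0
    rw [hlinsmul, hh3, h0] at h3
    linarith
  have hle : ∀ t, ∑ i, g i * t i ≤ φ t := by
    intro t
    have := hS t
    rw [hSt0] at this
    linarith
  refine ⟨g, ?_, hSt0, hle⟩
  intro i
  have h1 : φ (t0 - Pi.single i 1) ≤ 1 := by
    calc φ (t0 - Pi.single i 1) ≤ φ t0 := by
          apply hmono
          intro j
          simp only [Pi.sub_apply]
          rcases eq_or_ne j i with rfl | hji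
          · simp
          · simp [Pi.single_eq_of_ne hji]
      _ = 1 := h0
  have h2 := hle (t0 - Pi.single i 1)
  have h3 : ∑ j, g j * (t0 - Pi.single i 1 : Fin n → ℝ) j = (∑ j, g j * t0 j) - g i := by
    have e1 : ∀ j ∈ Finset.univ, g j * (t0 - Pi.single i 1 : Fin n → ℝ) j
        = g j * t0 j - g j * (Pi.single i 1 : Fin n → ℝ) j := by
      intro j _; simp only [Pi.sub_apply]; ring
    rw [Finset.sum_congr rfl e1, Finset.sum_sub_distrib]
    congr 1
    rw [Finset.sum_eq_single i]
    · simp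
    · intro j _ hji; simp [Pi.single_eq_of_ne hji]
    · intro h; exact absurd (Finset.mem_univ i) h
  rw [h3, hSt0] at h2
  linarith

private lemma aux_dot_le
    (hhom : ∀ c : ℝ, 0 < c → ∀ t, φ (c • t) = c * φ t)
    (hnonneg : ∀ t, 0 ≤ φ t)
    (hexh : ∀ t : Fin n → ℝ, ¬ (∀ i, t i ≤ 0) → 0 < φ t)
    {a : Fin n → ℝ} (ha : ∀ i, 0 ≤ a i)
    (hL : ∀ t, φ t = 1 → ∑ i, a i * t i ≤ 1) :
    ∀ t, ∑ i, a i * t i ≤ φ t := by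
  intro t
  by_cases hneg : ∀ i, t i ≤ 0
  · calc ∑ i, a i * t i ≤ 0 :=
        Finset.sum_nonpos fun i _ => mul_nonpos_of_nonneg_of_nonpos (ha i) (hneg i)
      _ ≤ φ t := hnonneg t
  · have hpos : 0 < φ t := hexh t hneg
    have h1 : φ ((φ t)⁻¹ • t) = 1 := by
      rw [hhom _ (inv_pos.2 hpos)]
      field_simp
    have h2 := hL _ h1
    have h3 : ∑ i, a i * ((φ t)⁻¹ • t) i = (φ t)⁻¹ * ∑ i, a i * t i := by
      rw [Finset.mul_sum]
      apply Finset.sum_congr rfl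
      intro i _
      simp only [Pi.smul_apply, smul_eq_mul]
      ring
    rw [h3] at h2
    calc ∑ i, a i * t i = φ t * ((φ t)⁻¹ * ∑ i, a i * t i) := by field_simp
      _ ≤ φ t * 1 := mul_le_mul_of_nonneg_left h2 hpos.le
      _ = φ t := mul_one _

private lemma aux_sSup_eq_one {S : Set (Fin n → ℝ)} {f : (Fin n → ℝ) → ℝ} {x : Fin n → ℝ}
    (hx : x ∈ S) (hfx : f x = 1) (hub : ∀ t ∈ S, f t ≤ 1) : sSup (f '' S) = 1 := by
  apply le_antisymm
  · exact csSup_le ⟨f x, Set.mem_image_of_mem f hx⟩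
      (by rintro y ⟨t, ht, rfl⟩; exact hub t ht)
  · rw [← hfx]
    exact le_csSup ⟨1, by rintro y ⟨t, ht, rfl⟩; exact hub t ht⟩ (Set.mem_image_of_mem f hx)

end Aux

/-- For a convex, positively homogeneous, nonnegative, coordinatewise nondecreasing and
exhaustive function `φ` with level set `L = {φ = 1}`, and a compact `F ⊆ L`, the set
`Θ_F = {λa : 0 ≤ λ ≤ 1, a ∈ Γ_F}` equals the gradient image `ω(F, φ₁)` of `F` under
`φ₁ = max(φ,1)`. -/
theorem thetaF_eq_gradient_image {n : ℕ} (φ : (Fin n → ℝ) → ℝ)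
    (hconv : ConvexOn ℝ Set.univ φ)
    (hhom : ∀ c : ℝ, 0 < c → ∀ t, φ (c • t) = c * φ t)
    (hnonneg : ∀ t, 0 ≤ φ t)
    (hmono : ∀ s t : Fin n → ℝ, (∀ i, s i ≤ t i) → φ s ≤ φ t)
    (hexh : ∀ t : Fin n → ℝ, ¬ (∀ i, t i ≤ 0) → 0 < φ t)
    (F : Set (Fin n → ℝ)) (hFc : IsCompact F) (hFL : F ⊆ {t | φ t = 1}) :
    {p : Fin n → ℝ | ∃ l : ℝ, ∃ a : Fin n → ℝ, 0 ≤ l ∧ l ≤ 1 ∧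
        ((∀ i, 0 ≤ a i) ∧
          sSup ((fun t => ∑ i, a i * t i) '' F) = 1 ∧
          sSup ((fun t => ∑ i, a i * t i) '' {t | φ t = 1}) = 1) ∧
        p = l • a}
      = ⋃ t0 ∈ F, {a : Fin n → ℝ | ∀ t, 1 + ∑ i, a i * (t i - t0 i) ≤ max (φ t) 1} := by
  ext p
  simp only [Set.mem_setOf_eq, Set.mem_iUnion, exists_prop]
  constructor
  · -- Θ_F ⊆ ω(F, φ₁)
    rintro ⟨l, a, hl0, hl1, ⟨ha0, hsF, hsL⟩, rfl⟩
    -- F is nonempty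
    have hFne : F.Nonempty := by
      by_contra h
      rw [Set.not_nonempty_iff_eq_empty] at h
      rw [h, Set.image_empty, Real.sSup_empty] at hsF
      norm_num at hsF
    -- the image of L is bounded above, hence dot a ≤ 1 on L
    have hLbdd : BddAbove ((fun t => ∑ i, a i * t i) '' {t | φ t = 1}) := by
      by_contra h
      rw [Real.sSup_of_not_bddAbove h] at hsL
      norm_num at hsL
    have hubL : ∀ t, φ t = 1 → ∑ i, a i * t i ≤ 1 := by
      intro t ht
      have := le_csSup hLbdd (Set.mem_image_of_mem _ ht)
      rwa [hsL] at this
    have hle : ∀ t, ∑ i, a i * t i ≤ φ t := aux_dot_le hhom hnonneg hexh ha0 hubL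
    -- maximizer over F
    have hcont : ContinuousOn (fun t : Fin n → ℝ => ∑ i, a i * t i) F := by
      apply Continuous.continuousOn
      exact continuous_finset_sum _ fun i _ => (continuous_const.mul (continuous_apply i))
    obtain ⟨t0, ht0F, ht0max⟩ := hFc.exists_isMaxOn hFne hcont
    have ht0ub : ∀ t ∈ F, ∑ i, a i * t i ≤ ∑ i, a i * t0 i := fun t ht => ht0max ht
    have ht0 : ∑ i, a i * t0 i = 1 := by
      apply le_antisymm
      · have : ∑ i, a i * t0 i ≤ sSup ((fun t => ∑ i, a i * t i) '' F) := by
          apply le_csSup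
          · exact ⟨∑ i, a i * t0 i, by rintro y ⟨t, ht, rfl⟩; exact ht0ub t ht⟩
          · exact Set.mem_image_of_mem _ ht0F
        rwa [hsF] at this
      · rw [← hsF]
        refine csSup_le ⟨_, Set.mem_image_of_mem _ ht0F⟩ ?_
        rintro y ⟨t, ht, rfl⟩
        exact ht0ub t ht
    refine ⟨t0, ht0F, ?_⟩
    intro t
    have h1 : ∑ i, (l • a) i * (t i - t0 i) = l * (∑ i, a i * t i) - l * (∑ i, a i * t0 i) := by
      rw [← mul_sub, ← Finset.sum_sub_distrib, Finset.mul_sum]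
      apply Finset.sum_congr rfl
      intro i _
      simp only [Pi.smul_apply, smul_eq_mul]
      ring
    rw [h1, ht0]
    have h2 := hle t
    have h3 := le_max_left (φ t) 1
    have h4 := le_max_right (φ t) 1
    nlinarith
  · -- ω(F, φ₁) ⊆ Θ_F
    rintro ⟨t0, ht0F, hsub⟩
    have ht0L : φ t0 = 1 := hFL ht0F
    -- p is nonnegative
    have hp0 : ∀ i, 0 ≤ p i := by
      intro i
      have h := hsub (t0 - Pi.single i 1)
      have hφ : φ (t0 - Pi.single i 1) ≤ 1 := by
        calc φ (t0 - Pi.single i 1) ≤ φ t0 := by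
              apply hmono
              intro j
              simp only [Pi.sub_apply]
              rcases eq_or_ne j i with rfl | hji
              · simp
              · simp [Pi.single_eq_of_ne hji]
          _ = 1 := ht0L
      rw [max_eq_right hφ] at h
      have hsum : ∑ j, p j * ((t0 - Pi.single i 1 : Fin n → ℝ) j - t0 j) = -p i := by
        have e1 : ∀ j ∈ Finset.univ, p j * ((t0 - Pi.single i 1 : Fin n → ℝ) j - t0 j)
            = -(p j * (Pi.single i 1 : Fin n → ℝ) j) := by
          intro j _; simp only [Pi.sub_apply]; ring
        rw [Finset.sum_congr rfl e1, Finset.sum_neg_distrib]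
        congr 1
        rw [Finset.sum_eq_single i]
        · simp
        · intro j _ hji; simp [Pi.single_eq_of_ne hji]
        · intro h'; exact absurd (Finset.mem_univ i) h'
      rw [hsum] at h
      linarith
    set lam : ℝ := ∑ i, p i * t0 i with hlam
    have hlam0 : 0 ≤ lam := by
      have h := hsub 0
      have hφ0 : φ 0 = 0 := aux_phi_zero hhom
      rw [hφ0, max_eq_right (by norm_num : (0:ℝ) ≤ 1)] at h
      have hsum : ∑ i, p i * ((0 : Fin n → ℝ) i - t0 i) = -lam := by
        rw [hlam, ← Finset.sum_neg_distrib]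
        apply Finset.sum_congr rfl
        intro i _
        simp
      rw [hsum] at h
      linarith
    have hlam1 : lam ≤ 1 := by
      have h := hsub ((2:ℝ) • t0)
      have hφ2 : φ ((2:ℝ) • t0) = 2 := by rw [hhom 2 (by norm_num), ht0L]; norm_num
      rw [hφ2, max_eq_left (by norm_num : (1:ℝ) ≤ 2)] at h
      have hsum : ∑ i, p i * (((2:ℝ) • t0) i - t0 i) = lam := by
        rw [hlam]
        apply Finset.sum_congr rfl
        intro i _
        simp only [Pi.smul_apply, smul_eq_mul]
        ring
      rw [hsum] at h
      linarith
    -- dot p t ≤ lam for t in L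
    have hdotL : ∀ t, φ t = 1 → ∑ i, p i * t i ≤ lam := by
      intro t ht
      have h := hsub t
      rw [ht, max_self] at h
      have hsum : ∑ i, p i * (t i - t0 i) = (∑ i, p i * t i) - lam := by
        rw [hlam, ← Finset.sum_sub_distrib]
        apply Finset.sum_congr rfl
        intro i _
        ring
      rw [hsum] at h
      linarith
    rcases hlam0.eq_or_lt with hlz | hlz
    · -- lam = 0 : p = 0
      have hpz : p = 0 := by
        funext i
        have hεdef : 0 < 1 + φ (Pi.single i 1) := by
          have := hnonneg (Pi.single i 1); linarith
        set ε : ℝ := (1 + φ (Pi.single i 1))⁻¹ with hε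
        have hεpos : 0 < ε := inv_pos.2 hεdef
        have hφε : φ (ε • (Pi.single i 1 : Fin n → ℝ)) ≤ 1 := by
          rw [hhom _ hεpos]
          rw [hε]
          rw [inv_mul_le_iff₀ hεdef]
          have := hnonneg (Pi.single i 1)
          linarith
        have h := hsub (ε • (Pi.single i 1 : Fin n → ℝ))
        rw [max_eq_right hφε] at h
        have hsum : ∑ j, p j * ((ε • (Pi.single i 1 : Fin n → ℝ)) j - t0 j)
            = ε * p i - lam := by
          have e1 : ∀ j ∈ Finset.univ, p j * ((ε • (Pi.single i 1 : Fin n → ℝ)) j - t0 j)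
              = p j * (ε • (Pi.single i 1 : Fin n → ℝ)) j - p j * t0 j := by
            intro j _; ring
          rw [Finset.sum_congr rfl e1, Finset.sum_sub_distrib, ← hlam]
          congr 1
          rw [Finset.sum_eq_single i]
          · simp only [Pi.smul_apply, smul_eq_mul, Pi.single_eq_same]; ring
          · intro j _ hji; simp [Pi.smul_apply, Pi.single_eq_of_ne hji]
          · intro h'; exact absurd (Finset.mem_univ i) h'
        rw [hsum, ← hlz] at h
        have : p i ≤ 0 := by nlinarith
        exact le_antisymm this (hp0 i)
      -- get a supporting functional at t0
      obtain ⟨g, hg0, hgt0, hgle⟩ := aux_support hconv hhom hnonneg hmono ht0L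
      refine ⟨0, g, le_refl 0, by norm_num, ⟨hg0, ?_, ?_⟩, by rw [hpz, zero_smul]⟩
      · apply aux_sSup_eq_one ht0F hgt0
        intro t ht
        have := hgle t
        rw [hFL ht] at this
        exact this
      · apply aux_sSup_eq_one (show t0 ∈ {t | φ t = 1} from ht0L) hgt0
        intro t ht
        have := hgle t
        rw [Set.mem_setOf_eq.mp ht] at this
        exact this
    · -- lam > 0
      set a : Fin n → ℝ := fun i => lam⁻¹ * p i with ha
      have hdotconv : ∀ t : Fin n → ℝ, ∑ i, a i * t i = lam⁻¹ * ∑ i, p i * t i := by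
        intro t
        rw [Finset.mul_sum]
        apply Finset.sum_congr rfl
        intro i _
        rw [ha]
        ring
      have hat0 : ∑ i, a i * t0 i = 1 := by
        rw [hdotconv, ← hlam, inv_mul_cancel₀ (ne_of_gt hlz)]
      have haub : ∀ t, φ t = 1 → ∑ i, a i * t i ≤ 1 := by
        intro t ht
        rw [hdotconv]
        have := hdotL t ht
        rw [← inv_mul_cancel₀ (ne_of_gt hlz)]
        exact mul_le_mul_of_nonneg_left this (inv_pos.2 hlz).le
      refine ⟨lam, a, hlam0, hlam1, ⟨?_, ?_, ?_⟩, ?_⟩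
      · intro i
        exact mul_nonneg (inv_pos.2 hlz).le (hp0 i)
      · exact aux_sSup_eq_one ht0F hat0 (fun t ht => haub t (hFL ht))
      · exact aux_sSup_eq_one (show t0 ∈ {t | φ t = 1} from ht0L) hat0
          (fun t ht => haub t ht)
      · funext i
        rw [Pi.smul_apply, ha, smul_eq_mul]
        field_simp
end

section
/- With φ, L, Γ, Θ as above, if a ∈ ω(F, φ₁) (i.e. there exists t⁰ ∈ F with φ₁(t) ≥ 1 + ⟨a, t - t⁰⟩ for all t), then ⟨a, t⁰⟩ ≤ 1 and ⟨a, t⁰⟩ ≥ ⟨a, t⟩ for all t ∈ L; consequently a ∈ Θ_F. -/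
open Finset

/-- Existence of a supporting functional at a point of the level set `{φ = 1}`. -/
lemma exists_support_functional {n : ℕ} (φ : (Fin n → ℝ) → ℝ)
    (hconv : ConvexOn ℝ Set.univ φ)
    (hhom : ∀ c : ℝ, 0 < c → ∀ t, φ (c • t) = c * φ t)
    (hnonneg : ∀ t, 0 ≤ φ t)
    (hmono : ∀ s t : Fin n → ℝ, (∀ i, s i ≤ t i) → φ s ≤ φ t)
    (t0 : Fin n → ℝ) (ht0 : φ t0 = 1) :
    ∃ b : Fin n → ℝ, (∀ i, 0 ≤ b i) ∧ (∀ t, φ t ≤ 1 → ∑ i, b i * t i ≤ 1) ∧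
      (∑ i, b i * t0 i = 1) := by
  classical
  have hφ0 : φ 0 = 0 := by
    have h := hhom 2 (by norm_num) 0
    rw [smul_zero] at h
    linarith
  have hsubadd : ∀ x y : Fin n → ℝ, φ (x + y) ≤ φ x + φ y := by
    intro x y
    have h2 := hhom 2 (by norm_num) ((1/2 : ℝ) • x + (1/2 : ℝ) • y)
    have hc := hconv.2 (Set.mem_univ x) (Set.mem_univ y)
      (by norm_num : (0:ℝ) ≤ 1/2) (by norm_num : (0:ℝ) ≤ 1/2) (by norm_num)
    have hx : (2 : ℝ) • ((1/2 : ℝ) • x + (1/2 : ℝ) • y) = x + y := by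
      rw [smul_add, smul_smul, smul_smul]; norm_num
    rw [hx] at h2
    simp only [smul_eq_mul] at hc
    rw [h2]; linarith
  set C : Set (Fin n → ℝ) := {t | φ t ≤ 1} with hCdef
  have hC : Convex ℝ C := by
    have := hconv.convex_le 1
    simpa [hCdef, Set.sep_univ] using this
  -- 0 is in the interior of C
  set M : ℝ := 1 + ∑ i, max (φ (fun j => if i = j then (1:ℝ) else 0))
      (φ (fun j => if i = j then (-1:ℝ) else 0)) with hMdef
  have hMpos : 0 < M := by
    have : (0:ℝ) ≤ ∑ i, max (φ (fun j => if i = j then (1:ℝ) else 0))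
        (φ (fun j => if i = j then (-1:ℝ) else 0)) :=
      Finset.sum_nonneg fun i _ => le_trans (hnonneg _) (le_max_left _ _)
    simp only [hMdef]; linarith
  have hsingle : ∀ (i : Fin n) (c : ℝ), φ (c • fun j => if i = j then (1:ℝ) else 0) ≤
      |c| * max (φ (fun j => if i = j then (1:ℝ) else 0))
        (φ (fun j => if i = j then (-1:ℝ) else 0)) := by
    intro i c
    rcases lt_trichotomy c 0 with hc | hc | hc
    · have : (c • fun j => if i = j then (1:ℝ) else 0) =
          (-c) • fun j => if i = j then (-1:ℝ) else 0 := by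
        funext j; by_cases h : i = j <;> simp [h]
      rw [this, hhom (-c) (by linarith) _, abs_of_neg hc]
      exact mul_le_mul_of_nonneg_left (le_max_right _ _) (by linarith)
    · subst hc; simp [hφ0]
    · rw [hhom c hc _, abs_of_pos hc]
      exact mul_le_mul_of_nonneg_left (le_max_left _ _) (le_of_lt hc)
  have hzero_int : (0 : Fin n → ℝ) ∈ interior C := by
    rw [mem_interior]
    refine ⟨Metric.ball 0 M⁻¹, ?_, Metric.isOpen_ball, by simp [hMpos, inv_pos]⟩
    intro t ht
    have htn : ‖t‖ < M⁻¹ := by simpa using ht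
    have hti : ∀ i, |t i| < M⁻¹ := fun i =>
      lt_of_le_of_lt (by simpa using norm_le_pi_norm t i) htn
    have ht1 : φ t ≤ ∑ i, φ ((t i) • fun j => if i = j then (1:ℝ) else 0) := by
      conv_lhs => rw [pi_eq_sum_univ t]
      exact Finset.le_sum_of_subadditive φ (le_of_eq hφ0) hsubadd _ _
    have ht2 : ∑ i, φ ((t i) • fun j => if i = j then (1:ℝ) else 0) ≤
        ∑ i, M⁻¹ * max (φ (fun j => if i = j then (1:ℝ) else 0))
          (φ (fun j => if i = j then (-1:ℝ) else 0)) := by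
      refine Finset.sum_le_sum fun i _ => le_trans (hsingle i (t i)) ?_
      exact mul_le_mul_of_nonneg_right (le_of_lt (hti i))
        (le_trans (hnonneg _) (le_max_left _ _))
    have ht3 : ∑ i, M⁻¹ * max (φ (fun j => if i = j then (1:ℝ) else 0))
        (φ (fun j => if i = j then (-1:ℝ) else 0)) ≤ M⁻¹ * M := by
      rw [← Finset.mul_sum]
      refine mul_le_mul_of_nonneg_left ?_ (le_of_lt (inv_pos.2 hMpos))
      simp only [hMdef]; linarith
    have : φ t ≤ M⁻¹ * M := le_trans ht1 (le_trans ht2 ht3)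
    rw [inv_mul_cancel₀ (ne_of_gt hMpos)] at this
    exact this
  have ht0_notin : t0 ∉ interior C := by
    intro h
    rw [mem_interior_iff_mem_nhds, Metric.mem_nhds_iff] at h
    obtain ⟨ε, hε, hball⟩ := h
    set δ : ℝ := ε / (2 * (‖t0‖ + 1)) with hδdef
    have hnorm : (0:ℝ) < ‖t0‖ + 1 := by positivity
    have hδ : 0 < δ := by positivity
    have hmem : (1 + δ) • t0 ∈ Metric.ball t0 ε := by
      rw [Metric.mem_ball, dist_eq_norm]
      have : (1 + δ) • t0 - t0 = δ • t0 := by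
        rw [add_smul, one_smul]; abel
      rw [this, norm_smul, Real.norm_eq_abs, abs_of_pos hδ]
      have key : δ * (‖t0‖ + 1) = ε / 2 := by
        rw [hδdef]; field_simp
      nlinarith [norm_nonneg t0]
    have := hball hmem
    have h1 : φ ((1 + δ) • t0) = (1 + δ) * φ t0 := hhom _ (by linarith) _
    rw [hCdef] at this
    simp only [Set.mem_setOf_eq] at this
    rw [h1, ht0] at this
    linarith
  obtain ⟨f, hf⟩ := geometric_hahn_banach_open_point (hC.interior) isOpen_interior ht0_notin
  have hf0 : (0:ℝ) < f t0 := by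
    have := hf 0 hzero_int
    simpa using this
  have hfle : ∀ t ∈ C, f t ≤ f t0 := by
    intro t htC
    by_contra h
    push_neg at h
    have hft : 0 < f t := lt_trans hf0 h
    set k : ℝ := (f t - f t0) / f t with hkdef
    have hk : 0 < k := div_pos (by linarith) hft
    have hk1 : 1 - k = f t0 / f t := by
      rw [hkdef]; field_simp; ring
    have hk1' : (0:ℝ) ≤ 1 - k := by rw [hk1]; positivity
    have hmem := hC.combo_interior_self_mem_interior hzero_int (show t ∈ C from htC)
      hk hk1' (by ring)
    rw [smul_zero, zero_add] at hmem
    have := hf _ hmem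
    rw [map_smul] at this
    simp only [smul_eq_mul] at this
    rw [hk1, div_mul_cancel₀ _ (ne_of_gt hft)] at this
    exact lt_irrefl _ this
  refine ⟨fun i => f (fun j => if i = j then (1:ℝ) else 0) / f t0, ?_, ?_, ?_⟩
  · intro i
    apply div_nonneg _ (le_of_lt hf0)
    by_contra h
    push_neg at h
    have hmem : (t0 - fun j => if i = j then (1:ℝ) else 0) ∈ C := by
      refine le_trans (hmono _ t0 fun j => ?_) (le_of_eq ht0)
      by_cases hj : i = j <;> simp [hj]
    have := hfle _ hmem
    rw [map_sub] at this
    linarith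
  all_goals {
    have hsum : ∀ t : Fin n → ℝ,
        ∑ i, (f (fun j => if i = j then (1:ℝ) else 0) / f t0) * t i = f t / f t0 := by
      intro t
      have hft : f t = ∑ i, t i * f (fun j => if i = j then (1:ℝ) else 0) := by
        conv_lhs => rw [pi_eq_sum_univ t, map_sum]
        refine Finset.sum_congr rfl fun i _ => ?_
        rw [map_smul]; simp
      rw [hft, Finset.sum_div]
      refine Finset.sum_congr rfl fun i _ => by ring
    first
      | (intro t htC
         rw [hsum]
         exact div_le_one_of_le₀ (hfle t htC) (le_of_lt hf0))
      | (rw [hsum, div_self (ne_of_gt hf0)])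
  }

/-- If `a` belongs to the gradient image `ω(F, φ₁)`, witnessed by `t⁰ ∈ F` with
`φ₁(t) ≥ 1 + ⟨a, t - t⁰⟩` for all `t`, then `⟨a,t⁰⟩ ≤ 1`, `⟨a,t⁰⟩ ≥ ⟨a,t⟩` for all `t ∈ L`,
and consequently `a ∈ Θ_F`. -/
theorem gradient_image_subset_thetaF {n : ℕ} (φ : (Fin n → ℝ) → ℝ)
    (hconv : ConvexOn ℝ Set.univ φ)
    (hhom : ∀ c : ℝ, 0 < c → ∀ t, φ (c • t) = c * φ t)
    (hnonneg : ∀ t, 0 ≤ φ t)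
    (hmono : ∀ s t : Fin n → ℝ, (∀ i, s i ≤ t i) → φ s ≤ φ t)
    (hexh : ∀ t : Fin n → ℝ, ¬ (∀ i, t i ≤ 0) → 0 < φ t)
    (F : Set (Fin n → ℝ)) (hFc : IsCompact F) (hFL : F ⊆ {t | φ t = 1})
    (a t0 : Fin n → ℝ) (ht0 : t0 ∈ F)
    (hsub : ∀ t : Fin n → ℝ, 1 + ∑ i, a i * (t i - t0 i) ≤ max (φ t) 1) :
    (∑ i, a i * t0 i ≤ 1) ∧
    (∀ t : Fin n → ℝ, φ t = 1 → ∑ i, a i * t i ≤ ∑ i, a i * t0 i) ∧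
    a ∈ {p : Fin n → ℝ | ∃ l : ℝ, ∃ b : Fin n → ℝ, 0 ≤ l ∧ l ≤ 1 ∧
        ((∀ i, 0 ≤ b i) ∧
          sSup ((fun t => ∑ i, b i * t i) '' F) = 1 ∧
          sSup ((fun t => ∑ i, b i * t i) '' {t | φ t = 1}) = 1) ∧
        p = l • b} := by
  classical
  have hφt0 : φ t0 = 1 := hFL ht0
  have hφ0 : φ 0 = 0 := by
    have h := hhom 2 (by norm_num) 0
    rw [smul_zero] at h
    linarith
  set s : ℝ := ∑ i, a i * t0 i with hsdef
  -- s ≤ 1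
  have h1 : s ≤ 1 := by
    have h := hsub ((2:ℝ) • t0)
    have h2 : φ ((2:ℝ) • t0) = 2 := by rw [hhom 2 (by norm_num) t0, hφt0]; ring
    rw [h2] at h
    have h3 : ∑ i, a i * (((2:ℝ) • t0) i - t0 i) = s := by
      rw [hsdef]
      refine Finset.sum_congr rfl fun i _ => ?_
      simp only [Pi.smul_apply, smul_eq_mul]; ring
    rw [h3] at h
    have : max (2:ℝ) 1 = 2 := by norm_num
    rw [this] at h; linarith
  -- maximality over L
  have h2 : ∀ t : Fin n → ℝ, φ t = 1 → ∑ i, a i * t i ≤ s := by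
    intro t ht
    have h := hsub t
    rw [ht, max_self] at h
    have h3 : ∑ i, a i * (t i - t0 i) = (∑ i, a i * t i) - s := by
      rw [hsdef, ← Finset.sum_sub_distrib]
      exact Finset.sum_congr rfl fun i _ => by ring
    rw [h3] at h; linarith
  -- s ≥ 0
  have h0 : 0 ≤ s := by
    have h := hsub 0
    rw [hφ0] at h
    have h3 : ∑ i, a i * ((0 : Fin n → ℝ) i - t0 i) = -s := by
      rw [hsdef, ← Finset.sum_neg_distrib]
      exact Finset.sum_congr rfl fun i _ => by simp only [Pi.zero_apply]; ring
    rw [h3] at h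
    have : max (0:ℝ) 1 = 1 := by norm_num
    rw [this] at h; linarith
  -- a is componentwise nonneg
  have ha : ∀ i, 0 ≤ a i := by
    intro i
    set t : Fin n → ℝ := fun j => t0 j - if i = j then 1 else 0 with htdef
    have hφt : φ t ≤ 1 := by
      refine le_trans (hmono t t0 fun j => ?_) (le_of_eq hφt0)
      by_cases hj : i = j <;> simp [htdef, hj]
    have h := hsub t
    have hmax : max (φ t) 1 = 1 := max_eq_right hφt
    rw [hmax] at h
    have h3 : ∑ j, a j * (t j - t0 j) = -a i := by
      rw [htdef]
      have : ∀ j ∈ Finset.univ, a j * ((t0 j - if i = j then 1 else 0) - t0 j) =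
          -(if i = j then a j else 0) := by
        intro j _; by_cases hj : i = j <;> simp [hj]
      rw [Finset.sum_congr rfl this, Finset.sum_neg_distrib, Finset.sum_ite_eq]
      simp
    rw [h3] at h; linarith
  refine ⟨h1, h2, ?_⟩
  rcases eq_or_lt_of_le h0 with hs0 | hspos
  · -- s = 0 : then a = 0, use a supporting functional for b
    have ha0 : a = 0 := by
      funext i
      have hnotall : ¬ (∀ j, (fun j => if i = j then (1:ℝ) else 0) j ≤ 0) := by
        push_neg; exact ⟨i, by simp⟩
      have hc : 0 < φ (fun j => if i = j then (1:ℝ) else 0) := hexh _ hnotall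
      set c := φ (fun j => if i = j then (1:ℝ) else 0) with hcdef
      have hmem : φ (c⁻¹ • fun j => if i = j then (1:ℝ) else 0) = 1 := by
        rw [hhom c⁻¹ (inv_pos.2 hc) _, ← hcdef, inv_mul_cancel₀ (ne_of_gt hc)]
      have h := h2 _ hmem
      rw [← hs0] at h
      have h3 : ∑ j, a j * (c⁻¹ • fun j => if i = j then (1:ℝ) else 0) j = a i * c⁻¹ := by
        have : ∀ j ∈ Finset.univ, a j * (c⁻¹ • fun j => if i = j then (1:ℝ) else 0) j =
            (if i = j then a j * c⁻¹ else 0) := by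
          intro j _; by_cases hj : i = j <;> simp [hj, mul_comm]
        rw [Finset.sum_congr rfl this, Finset.sum_ite_eq]
        simp
      rw [h3] at h
      have hai : a i ≤ 0 := by
        by_contra hcon
        push_neg at hcon
        have : 0 < a i * c⁻¹ := mul_pos hcon (inv_pos.2 hc)
        linarith
      exact le_antisymm hai (ha i)
    obtain ⟨b, hb0, hble, hbt0⟩ := exists_support_functional φ hconv hhom hnonneg hmono t0 hφt0
    refine ⟨0, b, le_refl 0, zero_le_one, ⟨hb0, ?_, ?_⟩, by rw [ha0, zero_smul]⟩
    · refine IsGreatest.csSup_eq ⟨⟨t0, ht0, hbt0⟩, ?_⟩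
      rintro x ⟨t, htF, rfl⟩
      exact hble t (le_of_eq (hFL htF))
    · refine IsGreatest.csSup_eq ⟨⟨t0, hφt0, hbt0⟩, ?_⟩
      rintro x ⟨t, htL, rfl⟩
      exact hble t (le_of_eq htL)
  · -- s > 0 : take b = a / s
    have heq : ∀ t : Fin n → ℝ, ∑ i, a i / s * t i = (∑ i, a i * t i) / s := by
      intro t
      rw [Finset.sum_div]; exact Finset.sum_congr rfl fun i _ => by ring
    refine ⟨s, fun i => a i / s, h0, h1, ⟨fun i => div_nonneg (ha i) h0, ?_, ?_⟩, ?_⟩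
    · refine IsGreatest.csSup_eq ⟨⟨t0, ht0, ?_⟩, ?_⟩
      · dsimp only
        rw [heq, ← hsdef, div_self (ne_of_gt hspos)]
      · rintro x ⟨t, htF, rfl⟩
        have := h2 t (hFL htF)
        dsimp only
        rw [heq]
        exact div_le_one_of_le₀ this (le_of_lt hspos)
    · refine IsGreatest.csSup_eq ⟨⟨t0, hφt0, ?_⟩, ?_⟩
      · dsimp only
        rw [heq, ← hsdef, div_self (ne_of_gt hspos)]
      · rintro x ⟨t, htL, rfl⟩
        have := h2 t htL
        dsimp only
        rw [heq]
        exact div_le_one_of_le₀ this (le_of_lt hspos)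
    · funext i
      simp only [Pi.smul_apply, smul_eq_mul]
      field_simp
end

section
/- With φ, L as above and E the set of extreme points of L (points of L not lying in the interior of any segment contained in L): if L is contained in {t : t_k ≤ b_k, 1 ≤ k ≤ n} minus the negative orthant for some b ∈ R₊^n, then sup_{t∈L} ⟨a,t⟩ = sup_{t∈E} ⟨a,t⟩ for every a in the closed positive orthant. -/
set_option maxHeartbeats 3200000 in
/-- If the level set `L = {φ = 1}` is contained in `{t : t_k ≤ b_k ∀k}` minus the open
negative orthant for some `b ∈ ℝ₊ⁿ`, then for every `a` in the closed positive orthant the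
supremum of `⟨a,·⟩` over `L` equals its supremum over the extreme points `E` of `L`. -/
theorem sup_on_L_eq_sup_on_extremePoints {n : ℕ} (φ : (Fin n → ℝ) → ℝ)
    (hconv : ConvexOn ℝ Set.univ φ)
    (hhom : ∀ c : ℝ, 0 < c → ∀ t, φ (c • t) = c * φ t)
    (hnonneg : ∀ t, 0 ≤ φ t)
    (hmono : ∀ s t : Fin n → ℝ, (∀ i, s i ≤ t i) → φ s ≤ φ t)
    (b : Fin n → ℝ) (hb : ∀ k, 0 ≤ b k)
    (hL : {t : Fin n → ℝ | φ t = 1} ⊆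
      {t : Fin n → ℝ | ∀ k, t k ≤ b k} \ {t : Fin n → ℝ | ∀ k, t k < 0}) :
    ∀ a : Fin n → ℝ, (∀ i, 0 ≤ a i) →
      sSup ((fun t : Fin n → ℝ => ∑ i, a i * t i) '' {t | φ t = 1}) =
      sSup ((fun t : Fin n → ℝ => ∑ i, a i * t i) ''
        Set.extremePoints ℝ {t : Fin n → ℝ | φ t = 1}) := by
  classical
  intro a ha
  set f : (Fin n → ℝ) → ℝ := fun t => ∑ i, a i * t i with hfdef
  by_cases hLne : ({t : Fin n → ℝ | φ t = 1} : Set (Fin n → ℝ)).Nonempty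
  swap
  · rw [Set.not_nonempty_iff_eq_empty] at hLne
    rw [hLne]
    simp
  obtain ⟨u, hu⟩ := hLne
  have hu' : φ u = 1 := hu
  -- φ 0 = 0
  have phi0 : φ 0 = 0 := by
    have h := hhom 2 (by norm_num) 0
    rw [smul_zero] at h; linarith
  -- subadditivity
  have subadd : ∀ x y : Fin n → ℝ, φ (x + y) ≤ φ x + φ y := by
    intro x y
    have h2 := hconv.2 (Set.mem_univ x) (Set.mem_univ y)
      (by norm_num : (0:ℝ) ≤ 1/2) (by norm_num : (0:ℝ) ≤ 1/2) (by norm_num)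
    have hh := hhom 2 (by norm_num) ((1/2 : ℝ) • x + (1/2 : ℝ) • y)
    have he : (2:ℝ) • ((1/2 : ℝ) • x + (1/2 : ℝ) • y) = x + y := by
      rw [smul_add, smul_smul, smul_smul]; norm_num
    rw [he] at hh
    simp only [smul_eq_mul] at h2
    linarith
  -- continuity
  have hcont : Continuous φ := by
    have h := hconv.continuousOn isOpen_univ
    rwa [continuousOn_univ] at h
  -- scaling into L
  have hscale : ∀ t, 0 < φ t → φ ((φ t)⁻¹ • t) = 1 := by
    intro t ht
    rw [hhom _ (inv_pos.2 ht)]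
    field_simp
  -- a nonnegative element of L
  obtain ⟨w, hw1, hwnn⟩ : ∃ w, φ w = 1 ∧ ∀ i, 0 ≤ w i := by
    set u0 : Fin n → ℝ := fun i => max (u i) 0 with hu0
    have hpos : 0 < φ u0 := by
      have := hmono u u0 fun i => le_max_left _ _
      rw [hu'] at this; linarith
    refine ⟨(φ u0)⁻¹ • u0, hscale u0 hpos, fun i => ?_⟩
    have : (0:ℝ) ≤ (φ u0)⁻¹ := inv_nonneg.2 hpos.le
    exact mul_nonneg this (le_max_right _ _)
  -- Lemma C (positive case)
  have keypos : ∀ t, 0 < φ t → ∀ j, t j ≤ φ t * b j := by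
    intro t ht j
    have hmem := hL (by exact hscale t ht)
    have h1 : (φ t)⁻¹ * t j ≤ b j := hmem.1 j
    calc t j = φ t * ((φ t)⁻¹ * t j) := by field_simp
    _ ≤ φ t * b j := mul_le_mul_of_nonneg_left h1 ht.le
  -- Lemma C
  have key : ∀ t j, t j ≤ φ t * b j := by
    intro t j
    rcases (hnonneg t).lt_or_eq with ht | ht
    · exact keypos t ht j
    · rw [← ht, zero_mul]
      by_contra hpos
      push_neg at hpos
      set c : ℝ := t j / (2 * (b j + 1)) with hc
      have hbj1 : (0:ℝ) < b j + 1 := by have := hb j; linarith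
      have hcpos : 0 < c := div_pos hpos (by linarith)
      set g : ℝ → ℝ := fun s => φ (t + s • w) with hg
      have hgcont : Continuous g := by
        apply hcont.comp
        exact continuous_const.add (continuous_id.smul continuous_const)
      have hg0 : g 0 = 0 := by simp [hg, ← ht]
      have hglb : ∀ s : ℝ, 0 < s → s - φ (-t) ≤ g s := by
        intro s hs
        have h1 : φ (s • w) ≤ φ (t + s • w) + φ (-t) := by
          have h2 := subadd (t + s • w) (-t)
          rwa [show t + s • w + -t = s • w by abel] at h2
        rw [hhom s hs w, hw1, mul_one] at h1
        show s - φ (-t) ≤ φ (t + s • w)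
        linarith
      set s1 : ℝ := φ (-t) + c with hs1def
      have hs1 : 0 < s1 := by
        have := hnonneg (-t); simp only [hs1def]; linarith
      have hgs1 : c ≤ g s1 := by
        have := hglb s1 hs1
        simp only [hs1def] at this ⊢
        linarith
      obtain ⟨s, hsmem, hgs⟩ := intermediate_value_Icc hs1.le hgcont.continuousOn
        (show c ∈ Set.Icc (g 0) (g s1) from ⟨by rw [hg0]; exact hcpos.le, hgs1⟩)
    -- φ (t + s • w) = c > 0
      have hc2 := keypos (t + s • w) (by rw [show φ (t + s • w) = g s from rfl, hgs]; exact hcpos) j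
      rw [show φ (t + s • w) = g s from rfl, hgs] at hc2
      have h3 : t j + s * w j ≤ c * b j := by simpa using hc2
      have h4 : 0 ≤ s * w j := mul_nonneg hsmem.1 (hwnn j)
      have h5 : c * (b j + 1) = t j / 2 := by
        rw [hc, div_mul_eq_mul_div, div_eq_div_iff (by linarith : (0:ℝ) < 2 * (b j + 1)).ne' (by norm_num)]
        ring
      nlinarith [hb j]
  -- C ⊆ {t ≤ b}
  have hCb : ∀ t : Fin n → ℝ, φ t ≤ 1 → ∀ j, t j ≤ b j := by
    intro t htle j
    have := key t j
    have h2 : φ t * b j ≤ b j := mul_le_of_le_one_left (hb j) htle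
    linarith
  -- bound for f
  have hfb : ∀ t : Fin n → ℝ, (∀ j, t j ≤ b j) → f t ≤ f b := by
    intro t htb
    exact Finset.sum_le_sum fun i _ => mul_le_mul_of_nonneg_left (htb i) (ha i)
  -- convexity of C
  have hCconv : Convex ℝ {t : Fin n → ℝ | φ t ≤ 1} := by
    intro p hp q hq α β hα hβ hαβ
    have h := hconv.2 (Set.mem_univ p) (Set.mem_univ q) hα hβ hαβ
    have : α * φ p + β * φ q ≤ 1 := by
      have h1 : α * φ p ≤ α * 1 := mul_le_mul_of_nonneg_left hp hα
      have h2 : β * φ q ≤ β * 1 := mul_le_mul_of_nonneg_left hq hβ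
      rw [mul_one] at h1 h2; linarith
    exact le_trans h this
  -- nonempty index type
  have hn : Nonempty (Fin n) := by
    by_contra hne
    rw [not_nonempty_iff] at hne
    have h0 : u = 0 := Subsingleton.elim u 0
    rw [h0, phi0] at hu'
    exact zero_ne_one hu'
  -- MAIN LEMMA
  have main : ∀ x : Fin n → ℝ, φ x ≤ 1 → ∀ ε : ℝ, 0 < ε →
      ∃ e ∈ Set.extremePoints ℝ {t : Fin n → ℝ | φ t = 1}, f x - ε ≤ f e := by
    intro x hx ε hε
    set D : ℝ := ∑ i, (b i - x i) with hD
    have hD0 : 0 ≤ D := Finset.sum_nonneg fun i _ => by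
      have := hCb x hx i; linarith
    set δ : ℝ := ε / (D + 1) with hδ
    have hδpos : 0 < δ := div_pos hε (by linarith)
    set B : ℝ := f b with hB
    set Sx : ℝ := ∑ i, x i with hSx
    set R : ℝ := 1 + max (-Sx) ((B - f x) / δ - Sx) with hR
    have hxR : -R ≤ Sx := by
      have := le_max_left (-Sx) ((B - f x) / δ - Sx)
      simp only [hR]; linarith
    set K : Set (Fin n → ℝ) := {t | φ t ≤ 1} ∩ {t | -R ≤ ∑ i, t i} with hK
    have hxK : x ∈ K := ⟨hx, hxR⟩
    have hKconv : Convex ℝ K := by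
      apply hCconv.inter
      intro p hp q hq α β hα hβ hαβ
      have : ∑ i, (α • p + β • q) i = α * ∑ i, p i + β * ∑ i, q i := by
        simp [Finset.mul_sum, Finset.sum_add_distrib]
      show -R ≤ ∑ i, (α • p + β • q) i
      rw [this]
      have h1 : α * (-R) ≤ α * ∑ i, p i := mul_le_mul_of_nonneg_left hp hα
      have h2 : β * (-R) ≤ β * ∑ i, q i := mul_le_mul_of_nonneg_left hq hβ
      have h3 : α * (-R) + β * (-R) = -R := by
        calc α * (-R) + β * (-R) = (α + β) * (-R) := by ring
        _ = 1 * (-R) := by rw [hαβ]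
        _ = -R := one_mul _
      linarith
    have hKclosed : IsClosed K := by
      apply IsClosed.inter
      · exact isClosed_le hcont continuous_const
      · exact isClosed_le continuous_const (by
          exact continuous_finset_sum _ fun i _ => continuous_apply i)
    have hKcomp : IsCompact K := by
      have hIcc : IsCompact (Set.Icc (fun _ : Fin n => -R - ∑ k, b k) b) := isCompact_Icc
      apply hIcc.of_isClosed_subset hKclosed
      intro t ht
      constructor
      · intro i
        have h1 : ∑ k ∈ Finset.univ.erase i, t k ≤ ∑ k ∈ Finset.univ.erase i, b k :=
          Finset.sum_le_sum fun k _ => hCb t ht.1 k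
        have h2 : ∑ k ∈ Finset.univ.erase i, b k ≤ ∑ k, b k :=
          Finset.sum_le_sum_of_subset_of_nonneg (Finset.subset_univ _)
            (fun k _ _ => hb k)
        have h3 : t i + ∑ k ∈ Finset.univ.erase i, t k = ∑ k, t k :=
          Finset.add_sum_erase _ _ (Finset.mem_univ i)
        have h4 : -R ≤ ∑ k, t k := ht.2
        show -R - ∑ k, b k ≤ t i
        linarith
      · intro i
        exact hCb t ht.1 i
    -- the perturbed linear functional
    set lfun : (Fin n → ℝ) →ₗ[ℝ] ℝ :=
      { toFun := fun t => ∑ i, (a i + δ) * t i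
        map_add' := fun p q => by
          simp [mul_add, Finset.sum_add_distrib]
        map_smul' := fun c p => by
          simp only [Pi.smul_apply, smul_eq_mul, RingHom.id_apply, Finset.mul_sum]
          exact Finset.sum_congr rfl fun i _ => by ring } with hlfun
    set l : (Fin n → ℝ) →L[ℝ] ℝ := LinearMap.toContinuousLinearMap lfun with hl
    have hlapp : ∀ t, l t = ∑ i, (a i + δ) * t i := fun t => rfl
    have hexpand : ∀ t : Fin n → ℝ, l t = f t + δ * ∑ i, t i := by
      intro t
      rw [hlapp, hfdef, Finset.mul_sum, ← Finset.sum_add_distrib]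
      exact Finset.sum_congr rfl fun i _ => by ring
    -- maximize over K
    obtain ⟨e0, he0K, he0max⟩ := hKcomp.exists_isMaxOn ⟨x, hxK⟩ l.continuous.continuousOn
    set F : Set (Fin n → ℝ) := l.toExposed K with hF
    have hFexp : IsExposed ℝ K F := ContinuousLinearMap.toExposed.isExposed
    have hFne : F.Nonempty := ⟨e0, he0K, fun y hy => he0max hy⟩
    have hFcomp : IsCompact F := hFexp.isCompact hKcomp
    obtain ⟨e, heF⟩ := hFcomp.extremePoints_nonempty hFne
    have heK : e ∈ Set.extremePoints ℝ K :=
      hFexp.isExtreme.extremePoints_subset_extremePoints heF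
    have heKmem : e ∈ K := heK.1
    have hemax : ∀ y ∈ K, l y ≤ l e := (heF.1).2
    have heb : ∀ j, e j ≤ b j := hCb e heKmem.1
    have hfeB : f e ≤ B := hfb e heb
    have hSeb : ∑ i, e i ≤ ∑ i, b i := Finset.sum_le_sum fun i _ => heb i
    -- e is strictly inside the half-space
    have heR : -R < ∑ i, e i := by
      have hge : -R ≤ ∑ i, e i := heKmem.2
      rcases lt_or_eq_of_le hge with h | h
      · exact h
      · exfalso
        have hmax := hemax x hxK
        rw [hexpand x, hexpand e, ← h] at hmax
        have hRge : (B - f x) / δ - Sx ≤ max (-Sx) ((B - f x) / δ - Sx) :=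
          le_max_right _ _
        have hδR : δ * ((B - f x) / δ) = B - f x := by
          field_simp
        have h6 : δ * R = δ + δ * max (-Sx) ((B - f x) / δ - Sx) := by
          rw [hR]; ring
        have h7 : δ * ((B - f x) / δ - Sx) ≤ δ * max (-Sx) ((B - f x) / δ - Sx) :=
          mul_le_mul_of_nonneg_left hRge hδpos.le
        rw [mul_sub, hδR] at h7
        -- hmax : f x + δ * Sx ≤ f e + δ * (-R)
        have h8 : f e ≤ B := hfeB
        simp only [← hSx] at hmax
        have h9 : δ * -R = -(δ * R) := by ring
        rw [h9, h6] at hmax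
        linarith
    -- e is an extreme point of C = {φ ≤ 1}
    have heC : e ∈ Set.extremePoints ℝ {t : Fin n → ℝ | φ t ≤ 1} := by
      refine ⟨heKmem.1, ?_⟩
      intro y hy z hz hseg
      obtain ⟨α, β, hα, hβ, hαβ, hcomb⟩ := hseg
      set Se : ℝ := ∑ i, e i with hSe
      set Sy : ℝ := ∑ i, y i with hSy
      set Sz : ℝ := ∑ i, z i with hSz
      set dnm : ℝ := 1 + |Sy - Se| + |Sz - Se| with hdnm
      have hdnmpos : 0 < dnm := by
        have := abs_nonneg (Sy - Se); have := abs_nonneg (Sz - Se)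
        simp only [hdnm]; linarith
      set τ : ℝ := min 1 ((Se + R) / dnm) with hτ
      have hSeR : 0 < Se + R := by simp only [hSe]; linarith [heR]
      have hτpos : 0 < τ := lt_min one_pos (div_pos hSeR hdnmpos)
      have hτ1 : τ ≤ 1 := min_le_left _ _
      have hτd : τ * dnm ≤ Se + R := by
        rw [← le_div_iff₀ hdnmpos]
        exact min_le_right _ _
      set y' : Fin n → ℝ := e + τ • (y - e) with hy'
      set z' : Fin n → ℝ := e + τ • (z - e) with hz'
      have hy'conv : y' = (1 - τ) • e + τ • y := by rw [hy']; module
      have hz'conv : z' = (1 - τ) • e + τ • z := by rw [hz']; module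
      have hy'C : φ y' ≤ 1 := by
        rw [hy'conv]
        have h := hconv.2 (Set.mem_univ e) (Set.mem_univ y)
          (by linarith : (0:ℝ) ≤ 1 - τ) hτpos.le (by ring)
        have h1 : (1 - τ) * φ e ≤ (1 - τ) * 1 :=
          mul_le_mul_of_nonneg_left heKmem.1 (by linarith)
        have h2 : τ * φ y ≤ τ * 1 := mul_le_mul_of_nonneg_left hy hτpos.le
        rw [mul_one] at h1 h2
        simp only [smul_eq_mul] at h
        linarith
      have hz'C : φ z' ≤ 1 := by
        rw [hz'conv]
        have h := hconv.2 (Set.mem_univ e) (Set.mem_univ z)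
          (by linarith : (0:ℝ) ≤ 1 - τ) hτpos.le (by ring)
        have h1 : (1 - τ) * φ e ≤ (1 - τ) * 1 :=
          mul_le_mul_of_nonneg_left heKmem.1 (by linarith)
        have h2 : τ * φ z ≤ τ * 1 := mul_le_mul_of_nonneg_left hz hτpos.le
        rw [mul_one] at h1 h2
        simp only [smul_eq_mul] at h
        linarith
      have hsum' : ∀ v : Fin n → ℝ, ∑ i, (e + τ • (v - e)) i
          = Se + τ * ((∑ i, v i) - Se) := by
        intro v
        simp only [Pi.add_apply, Pi.smul_apply, Pi.sub_apply, smul_eq_mul]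
        rw [Finset.sum_add_distrib, ← Finset.mul_sum, Finset.sum_sub_distrib]
      have hy'R : -R ≤ ∑ i, y' i := by
        rw [hy', hsum' y, ← hSy]
        have h1 : -(τ * |Sy - Se|) ≤ τ * (Sy - Se) := by
          have h0 := mul_le_mul_of_nonneg_left (neg_abs_le (Sy - Se)) hτpos.le
          rw [mul_neg] at h0
          exact h0
        have h2 : τ * |Sy - Se| ≤ Se + R := by
          have h3 : |Sy - Se| ≤ dnm := by
            have := abs_nonneg (Sz - Se); simp only [hdnm]; linarith
          have h4 := mul_le_mul_of_nonneg_left h3 hτpos.le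
          linarith
        linarith
      have hz'R : -R ≤ ∑ i, z' i := by
        rw [hz', hsum' z, ← hSz]
        have h1 : -(τ * |Sz - Se|) ≤ τ * (Sz - Se) := by
          have h0 := mul_le_mul_of_nonneg_left (neg_abs_le (Sz - Se)) hτpos.le
          rw [mul_neg] at h0
          exact h0
        have h2 : τ * |Sz - Se| ≤ Se + R := by
          have h3 : |Sz - Se| ≤ dnm := by
            have := abs_nonneg (Sy - Se); simp only [hdnm]; linarith
          have h4 := mul_le_mul_of_nonneg_left h3 hτpos.le
          linarith
        linarith
      have hy'K : y' ∈ K := ⟨hy'C, hy'R⟩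
      have hz'K : z' ∈ K := ⟨hz'C, hz'R⟩
      have hcomb' : α • y' + β • z' = e := by
        have : α • y' + β • z' = (α + β) • e + τ • (α • y + β • z)
            - (τ * (α + β)) • e := by
          rw [hy', hz']; module
        rw [this, hαβ, hcomb]
        module
      have hext := heK.2 hy'K hz'K ⟨α, β, hα, hβ, hαβ, hcomb'⟩
      have hy'e : y' = e := hext
      · have : τ • (y - e) = 0 := by
          have := hy'e; rw [hy'] at this
          simpa [add_eq_left] using this
        rcases smul_eq_zero.1 this with h | h
        · exact absurd h hτpos.ne'
        · rw [sub_eq_zero] at h; exact h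
    -- φ e = 1
    have hφe : φ e = 1 := by
      have hle1 : φ e ≤ 1 := heKmem.1
      rcases lt_or_eq_of_le hle1 with hlt | heq
      · exfalso
        set one : Fin n → ℝ := fun _ => 1 with hone
        set η : ℝ := (1 - φ e) / (φ one + 1) with hη
        have honepos : 0 < φ one + 1 := by have := hnonneg one; linarith
        have hηpos : 0 < η := div_pos (by linarith) honepos
        set y : Fin n → ℝ := e + η • one with hy
        set z : Fin n → ℝ := e - η • one with hz
        have hyC : φ y ≤ 1 := by
          have h1 := subadd e (η • one)
          rw [hhom η hηpos one] at h1
          have h2 : η * φ one ≤ η * (φ one + 1) :=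
            mul_le_mul_of_nonneg_left (by linarith) hηpos.le
          have h3 : η * (φ one + 1) = 1 - φ e := by
            rw [hη]; field_simp
          show φ (e + η • one) ≤ 1
          linarith
        have hzC : φ z ≤ 1 := by
          have h1 : φ z ≤ φ e := by
            apply hmono
            intro i
            simp only [hz, Pi.sub_apply, Pi.smul_apply, smul_eq_mul, hone]
            nlinarith
          linarith
        have hmid : (1/2 : ℝ) • y + (1/2 : ℝ) • z = e := by
          rw [hy, hz]; module
        have hext := heC.2 hyC hzC
          ⟨1/2, 1/2, by norm_num, by norm_num, by norm_num, hmid⟩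
        have : η • one = 0 := by
          have h := hext; rw [hy] at h
          simpa [add_eq_left] using h
        have h2 := congr_fun this hn.some
        simp only [Pi.smul_apply, hone, smul_eq_mul, mul_one, Pi.zero_apply] at h2
        exact hηpos.ne' h2
      · exact heq.symm ▸ rfl
    -- e is an extreme point of L
    have heL : e ∈ Set.extremePoints ℝ {t : Fin n → ℝ | φ t = 1} := by
      refine ⟨hφe, ?_⟩
      intro y hy z hz hseg
      exact heC.2 (le_of_eq hy) (le_of_eq hz) hseg
    -- value estimate
    refine ⟨e, heL, ?_⟩
    have hmax := hemax x hxK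
    rw [hexpand x, hexpand e] at hmax
    have hDeq : D = (∑ i, b i) - Sx := by
      rw [hD, hSx, Finset.sum_sub_distrib]
    have h1 : δ * (D + 1) = ε := by
      rw [hδ]; field_simp
    have h2 : δ * Sx - δ * (∑ i, e i) ≥ δ * Sx - δ * (∑ i, b i) := by
      have := mul_le_mul_of_nonneg_left hSeb hδpos.le
      linarith
    -- f x + δ Sx ≤ f e + δ Se  ⇒  f e ≥ f x + δ(Sx - Se) ≥ f x - δ D ≥ f x - ε
    have h3 : δ * Sx - δ * (∑ i, b i) = -(δ * D) := by
      rw [hDeq]; ring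
    simp only [← hSx] at hmax
    nlinarith
  -- ASSEMBLY
  have hbddL : BddAbove (f '' {t : Fin n → ℝ | φ t = 1}) := by
    refine ⟨f b, ?_⟩
    rintro v ⟨t, ht, rfl⟩
    exact hfb t fun j => hCb t (le_of_eq ht) j
  have hELsub : (f '' Set.extremePoints ℝ {t : Fin n → ℝ | φ t = 1})
      ⊆ f '' {t : Fin n → ℝ | φ t = 1} :=
    Set.image_mono extremePoints_subset
  have hbddE : BddAbove (f '' Set.extremePoints ℝ {t : Fin n → ℝ | φ t = 1}) :=
    hbddL.mono hELsub
  obtain ⟨e1, he1, -⟩ := main u (le_of_eq hu') 1 one_pos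
  have hEne : (f '' Set.extremePoints ℝ {t : Fin n → ℝ | φ t = 1}).Nonempty :=
    ⟨f e1, Set.mem_image_of_mem f he1⟩
  apply le_antisymm
  · apply csSup_le ⟨f u, Set.mem_image_of_mem f hu⟩
    rintro v ⟨t, ht, rfl⟩
    apply le_of_forall_sub_le
    intro ε hε
    obtain ⟨e, heE, hev⟩ := main t (le_of_eq ht) ε hε
    exact le_trans hev (le_csSup hbddE (Set.mem_image_of_mem f heE))
  · exact csSup_le_csSup hbddL hEne hELsub
end
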